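/- Any two total valid colorings of a finite simple graph G color the same number of vertices black; this number equals twice the common cardinality of the dominating induced matchings of G. -/
import Mathlib


variable {V : Type*}

/-- An edge `e` dominates an edge `f` if they share a vertex
(in particular every edge dominates itself). -/
def Dominates (e f : Sym2 V) : Prop := ∃ v, v ∈ e ∧ v ∈ f

/-- A set of edges `E'` of a simple graph `G` is a dominating induced matching
if every edge of `G` is dominated by exactly one edge of `E'`. -/
def IsDIM (G : SimpleGraph V) (E' : Set (Sym2 V)) : Prop :=
  E' ⊆ G.edgeSet ∧ ∀ f ∈ G.edgeSet, ∃! e, e ∈ E' ∧ Dominates e f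
/-- A total coloring (`true` = black, `false` = white) of the vertices of `G` is valid
if no two white vertices are adjacent and every black vertex has exactly one
black neighbor. -/
def ValidColoring (G : SimpleGraph V) (C : V → Bool) : Prop :=
  (∀ u v, G.Adj u v → ¬(C u = false ∧ C v = false)) ∧
  (∀ v, C v = true → ∃! u, G.Adj v u ∧ C u = true)

lemma dominates_symm {e f : Sym2 V} (h : Dominates e f) : Dominates f e := by
  obtain ⟨v, hv1, hv2⟩ := h; exact ⟨v, hv2, hv1⟩

/-- Any two DIMs (as finsets) have the same cardinality. -/
lemma dim_card_eq (G : SimpleGraph V) (D₁ D₂ : Finset (Sym2 V))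
    (h₁ : IsDIM G ↑D₁) (h₂ : IsDIM G ↑D₂) : D₁.card = D₂.card := by
  refine Finset.card_bij'
    (fun e he => (h₂.2 e (h₁.1 he)).choose)
    (fun e he => (h₁.2 e (h₂.1 he)).choose)
    (fun e he => (h₂.2 e (h₁.1 he)).choose_spec.1.1)
    (fun e he => (h₁.2 e (h₂.1 he)).choose_spec.1.1)
    (fun e he => ?_) (fun e he => ?_)
  · have hfspec := (h₂.2 e (h₁.1 he)).choose_spec.1
    exact ((h₁.2 _ (h₂.1 hfspec.1)).choose_spec.2 e ⟨he, dominates_symm hfspec.2⟩).symm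
  · have hfspec := (h₁.2 e (h₂.1 he)).choose_spec.1
    exact ((h₂.2 _ (h₁.1 hfspec.1)).choose_spec.2 e ⟨he, dominates_symm hfspec.2⟩).symm

/-- From a valid coloring we get a DIM whose size is half the number of black vertices. -/
lemma coloring_dim [Fintype V] (G : SimpleGraph V) (C : V → Bool)
    (h : ValidColoring G C) :
    ∃ E : Finset (Sym2 V), IsDIM G ↑E ∧
      (Finset.univ.filter fun v => C v = true).card = 2 * E.card := by
  classical
  set E : Finset (Sym2 V) :=
    G.edgeFinset.filter (fun e => ∀ v ∈ e, C v = true) with hE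
  have hmem : ∀ e, e ∈ E ↔ e ∈ G.edgeSet ∧ ∀ v ∈ e, C v = true := by
    intro e
    simp [hE, SimpleGraph.mem_edgeFinset]
  -- key: for any black vertex x, any edge of E containing x equals s(x, w(x))
  have key : ∀ x (hx : C x = true), ∀ e ∈ E, x ∈ e →
      e = s(x, (h.2 x hx).choose) := by
    intro x hx e heE hxe
    obtain ⟨heG, hebl⟩ := (hmem e).1 heE
    induction e using Sym2.ind with
    | _ a b =>
      have hab : G.Adj a b := heG
      rcases Sym2.mem_iff.1 hxe with rfl | rfl
      · have hb : b = (h.2 x hx).choose :=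
          (h.2 x hx).choose_spec.2 b ⟨hab, hebl b (Sym2.mem_mk_right _ _)⟩
        rw [hb]
      · have ha : a = (h.2 x hx).choose :=
          (h.2 x hx).choose_spec.2 a ⟨hab.symm, hebl a (Sym2.mem_mk_left _ _)⟩
        rw [ha, Sym2.eq_swap]
  have hblackedge : ∀ x (hx : C x = true), s(x, (h.2 x hx).choose) ∈ E := by
    intro x hx
    have hwspec := (h.2 x hx).choose_spec.1
    rw [hmem]
    refine ⟨hwspec.1, ?_⟩
    intro z hz
    rcases Sym2.mem_iff.1 hz with rfl | rfl
    · exact hx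
    · exact hwspec.2
  refine ⟨E, ⟨fun e he => ((hmem e).1 he).1, ?_⟩, ?_⟩
  · -- every edge dominated by exactly one edge of E
    intro f hf
    induction f using Sym2.ind with
    | _ u v =>
    have hadj : G.Adj u v := hf
    have hblack : C u = true ∨ C v = true := by
      rcases Bool.eq_false_or_eq_true (C u) with hu | hu
      · exact Or.inl hu
      · rcases Bool.eq_false_or_eq_true (C v) with hv | hv
        · exact Or.inr hv
        · exact absurd ⟨hu, hv⟩ (h.1 u v hadj)
    obtain ⟨x, y, hx, hfeq⟩ : ∃ x y, C x = true ∧ s(u, v) = s(x, y) := by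
      rcases hblack with hu | hv
      · exact ⟨u, v, hu, rfl⟩
      · exact ⟨v, u, hv, Sym2.eq_swap⟩
    have hxyadj : G.Adj x y := (G.mem_edgeSet).1 (hfeq ▸ hf)
    refine ⟨s(x, (h.2 x hx).choose), ⟨hblackedge x hx,
      ⟨x, Sym2.mem_mk_left _ _, by rw [hfeq]; exact Sym2.mem_mk_left x y⟩⟩, ?_⟩
    rintro e ⟨heE, z, hze, hzf⟩
    have hzbl : C z = true := ((hmem e).1 heE).2 z hze
    rw [hfeq] at hzf
    rcases Sym2.mem_iff.1 hzf with rfl | rfl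
    · exact key z hzbl e heE hze
    · have hwy : (h.2 x hx).choose = z :=
        ((h.2 x hx).choose_spec.2 z ⟨hxyadj, hzbl⟩).symm
      have hxz : (h.2 z hzbl).choose = x :=
        ((h.2 z hzbl).choose_spec.2 x ⟨hxyadj.symm, hx⟩).symm
      rw [key z hzbl e heE hze, hxz, hwy, Sym2.eq_swap]
  · -- counting: black = 2 * |E|
    have hcover : (Finset.univ.filter fun v => C v = true) =
        E.biUnion (fun e => Finset.univ.filter (· ∈ e)) := by
      ext v
      simp only [Finset.mem_filter, Finset.mem_univ, true_and, Finset.mem_biUnion]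
      constructor
      · intro hv
        exact ⟨s(v, (h.2 v hv).choose), hblackedge v hv, Sym2.mem_mk_left _ _⟩
      · rintro ⟨e, heE, hve⟩
        exact ((hmem e).1 heE).2 v hve
    have hdisj : ∀ e₁ ∈ E, ∀ e₂ ∈ E, e₁ ≠ e₂ →
        Disjoint (Finset.univ.filter (· ∈ e₁)) (Finset.univ.filter (· ∈ e₂)) := by
      intro e₁ h1 e₂ h2 hne
      rw [Finset.disjoint_left]
      intro v hv1 hv2
      simp only [Finset.mem_filter, Finset.mem_univ, true_and] at hv1 hv2
      have hvbl : C v = true := ((hmem e₁).1 h1).2 v hv1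
      exact hne ((key v hvbl e₁ h1 hv1).trans (key v hvbl e₂ h2 hv2).symm)
    have hcard2 : ∀ e ∈ E, (Finset.univ.filter (· ∈ e)).card = 2 := by
      intro e heE
      obtain ⟨heG, -⟩ := (hmem e).1 heE
      induction e using Sym2.ind with
      | _ a b =>
        have hab : G.Adj a b := heG
        have : (Finset.univ.filter (· ∈ s(a, b))) = {a, b} := by
          ext z
          simp [Sym2.mem_iff]
        rw [this, Finset.card_pair (G.ne_of_adj hab)]
    rw [hcover, Finset.card_biUnion hdisj, Finset.sum_congr rfl hcard2,
      Finset.sum_const, smul_eq_mul, mul_comm]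

/-- Any two total valid colorings of `G` have the same number of black vertices,
and this number is twice the cardinality of any dominating induced matching. -/
theorem stmt_14 [Fintype V] (G : SimpleGraph V) (C₁ C₂ : V → Bool)
    (h₁ : ValidColoring G C₁) (h₂ : ValidColoring G C₂)
    (D : Finset (Sym2 V)) (hD : IsDIM G ↑D) :
    (Finset.univ.filter fun v => C₁ v = true).card =
      (Finset.univ.filter fun v => C₂ v = true).card ∧
    (Finset.univ.filter fun v => C₁ v = true).card = 2 * D.card := by
  obtain ⟨E₁, hE₁, hc₁⟩ := coloring_dim G C₁ h₁
  obtain ⟨E₂, hE₂, hc₂⟩ := coloring_dim G C₂ h₂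
  have e1 : E₁.card = D.card := dim_card_eq G E₁ D hE₁ hD
  have e2 : E₂.card = D.card := dim_card_eq G E₂ D hE₂ hD
  constructor
  · rw [hc₁, hc₂, e1, e2]
  · rw [hc₁, e1]
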